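/- Let G be an Eulerian digraph in which every node has in-degree 2 and out-degree 2, let P be the 0/1-circulation polytope of G, let 0 ∈ P be the zero flow, and let 1 ∈ P be the full flow. Then there exists a list ((g_1,λ_1),(g_2,λ_2)) that is simultaneously a circuit walk of length 2 from 0 to 1 and a sign-compatible circuit decomposition of 1 − 0 if and only if G decomposes into two simple Hamiltonian dicycles. -/

import Mathlib

open Matrix

/-- `g` is a circuit of the polyhedron `{x : A x = b, B x ≤ d}` with respect to the
description `(A, B)`: a nonzero element of `ker A` with coprime integral components such that
`B g` is support-minimal among `{B x : x ∈ ker A, x ≠ 0}`. -/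
def IsCircuit {mA mB n : Type*} [Fintype n]
    (A : Matrix mA n ℝ) (B : Matrix mB n ℝ) (g : n → ℝ) : Prop :=
  A.mulVec g = 0 ∧ g ≠ 0 ∧
  (∃ z : n → ℤ, (∀ i, (z i : ℝ) = g i) ∧ Finset.univ.gcd z = 1) ∧
  ∀ x : n → ℝ, A.mulVec x = 0 → x ≠ 0 →
    ¬ (Function.support (B.mulVec x) ⊂ Function.support (B.mulVec g))

/-- Membership in the polyhedron `{x : A x = b, B x ≤ d}`. -/
def InPoly {mA mB n : Type*} [Fintype n] (A : Matrix mA n ℝ) (b : mA → ℝ)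
    (B : Matrix mB n ℝ) (d : mB → ℝ) (x : n → ℝ) : Prop :=
  A.mulVec x = b ∧ B.mulVec x ≤ d

/-- `((g 0, lam 0), …, (g (r-1), lam (r-1)))` is a (maximal) circuit walk from `x` to `y`
in the polyhedron `{x : A x = b, B x ≤ d}`. -/
def IsCircuitWalk {mA mB n : Type*} [Fintype n]
    (A : Matrix mA n ℝ) (b : mA → ℝ) (B : Matrix mB n ℝ) (d : mB → ℝ)
    (x y : n → ℝ) (r : ℕ) (g : Fin r → n → ℝ) (lam : Fin r → ℝ) : Prop :=
  (∀ i, IsCircuit A B (g i)) ∧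
  (∀ i, 0 < lam i) ∧
  (∀ k : Fin r, InPoly A b B d (x + ∑ i ∈ Finset.univ.filter (fun i => i ≤ k), lam i • g i)) ∧
  (x + ∑ i, lam i • g i = y) ∧
  (∀ k : Fin r, ∀ mu : ℝ, lam k < mu →
    ¬ InPoly A b B d ((x + ∑ i ∈ Finset.univ.filter (fun i => i < k), lam i • g i) + mu • g k))

/-- `u` and `u'` are sign-compatible with respect to `B`. -/
def SignCompat {mB n : Type*} [Fintype n] (B : Matrix mB n ℝ) (u u' : n → ℝ) : Prop :=
  ∀ i, 0 ≤ B.mulVec u i * B.mulVec u' i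

/-- Sign-compatible circuit decomposition of the vector `u` with respect to `(A, B)`. -/
def IsSCDecomp {mA mB n : Type*} [Fintype n]
    (A : Matrix mA n ℝ) (B : Matrix mB n ℝ) (u : n → ℝ)
    (r : ℕ) (g : Fin r → n → ℝ) (lam : Fin r → ℝ) : Prop :=
  (∀ i, IsCircuit A B (g i)) ∧ (∀ i, 0 < lam i) ∧ (∑ i, lam i • g i = u) ∧
  ∀ i j, SignCompat B (g i) (g j)

/-- A loopless digraph with node type `N` and arc type `α`. -/
structure Digraph' (N α : Type*) where
  src : α → N
  dst : α → N
  loopless : ∀ a, src a ≠ dst a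

/-- The node-arc incidence matrix of a digraph. -/
def incMat {N α : Type*} [DecidableEq N] (G : Digraph' N α) : Matrix N α ℝ :=
  Matrix.of fun v a => if G.src a = v then 1 else if G.dst a = v then -1 else 0

/-- The inequality system `x ≤ 1`-style box constraints: rows of the identity followed by
rows of the negative identity. -/
def boxB (α : Type*) [DecidableEq α] : Matrix (α ⊕ α) α ℝ :=
  Matrix.fromRows 1 (-1)

/-- Right-hand side for the box constraints `x ≤ 1`, `-x ≤ 0` of the 0/1-circulation polytope. -/
def boxd (α : Type*) : α ⊕ α → ℝ := Sum.elim (fun _ => 1) (fun _ => 0)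

/-- In-degree of a node. -/
def inDeg {N α : Type*} [Fintype α] [DecidableEq N] (G : Digraph' N α) (v : N) : ℕ :=
  (Finset.univ.filter fun a => G.dst a = v).card

/-- Out-degree of a node. -/
def outDeg {N α : Type*} [Fintype α] [DecidableEq N] (G : Digraph' N α) (v : N) : ℕ :=
  (Finset.univ.filter fun a => G.src a = v).card

/-- `S` is the arc set of a simple dicycle of `G` (a directed cycle with no repeated nodes). -/
def IsSimpleDicycle {N α : Type*} (G : Digraph' N α) (S : Set α) : Prop :=
  ∃ (k : ℕ) (e : Fin (k+1) → α) (v : Fin (k+1) → N),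
    Function.Injective e ∧ Function.Injective v ∧ S = Set.range e ∧
    ∀ i, G.src (e i) = v i ∧ G.dst (e i) = v (i + 1)

/-- `S` is the arc set of a simple Hamiltonian dicycle of `G`. -/
def IsHamiltonianDicycle {N α : Type*} (G : Digraph' N α) (S : Set α) : Prop :=
  ∃ (k : ℕ) (e : Fin (k+1) → α) (v : Fin (k+1) → N),
    Function.Injective e ∧ Function.Bijective v ∧ S = Set.range e ∧
    ∀ i, G.src (e i) = v i ∧ G.dst (e i) = v (i + 1)

/-- `G` decomposes into two simple Hamiltonian dicycles. -/
def DecompTwoHamiltonian {N α : Type*} (G : Digraph' N α) : Prop :=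
  ∃ S₁ S₂ : Set α, IsHamiltonianDicycle G S₁ ∧ IsHamiltonianDicycle G S₂ ∧
    Disjoint S₁ S₂ ∧ S₁ ∪ S₂ = Set.univ

section Helpers
set_option linter.unusedSectionVars false

variable {N α : Type*} [Fintype N] [Fintype α] [DecidableEq N] [DecidableEq α]

/-- characteristic vector of a set of arcs. -/
noncomputable def chi {α : Type*} (S : Set α) : α → ℝ := S.indicator 1

lemma chi_mem {α : Type*} {S : Set α} {a : α} (h : a ∈ S) : chi S a = 1 :=
  Set.indicator_of_mem h 1

lemma chi_not_mem {α : Type*} {S : Set α} {a : α} (h : a ∉ S) : chi S a = 0 :=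
  Set.indicator_of_notMem h 1

lemma chi_nonneg {α : Type*} (S : Set α) (a : α) : 0 ≤ chi S a := by
  by_cases h : a ∈ S
  · rw [chi_mem h]; norm_num
  · rw [chi_not_mem h]

lemma chi_le_one {α : Type*} (S : Set α) (a : α) : chi S a ≤ 1 := by
  by_cases h : a ∈ S
  · rw [chi_mem h]
  · rw [chi_not_mem h]; norm_num

lemma chi_ne_iff {α : Type*} (S : Set α) (a : α) : chi S a ≠ 0 ↔ a ∈ S := by
  by_cases h : a ∈ S
  · simp [chi_mem h, h]
  · simp [chi_not_mem h, h]

lemma boxB_mulVec (x : α → ℝ) : (boxB α).mulVec x = Sum.elim x (-x) := by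
  unfold boxB
  rw [Matrix.fromRows_mulVec, Matrix.one_mulVec, Matrix.neg_mulVec, Matrix.one_mulVec]

lemma box_support_subset_iff (x y : α → ℝ) :
    Function.support ((boxB α).mulVec x) ⊆ Function.support ((boxB α).mulVec y) ↔
      Function.support x ⊆ Function.support y := by
  rw [boxB_mulVec, boxB_mulVec]
  constructor
  · intro h a ha
    have h1 : Sum.elim x (-x) (Sum.inl a) ≠ 0 := by simpa using ha
    have := h h1
    simpa using this
  · intro h i hi
    rcases i with a | a
    · simp only [Function.mem_support, Sum.elim_inl] at hi ⊢
      exact h hi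
    · simp only [Function.mem_support, Sum.elim_inr, Pi.neg_apply, ne_eq, neg_eq_zero] at hi ⊢
      exact h hi

lemma box_support_ssubset_iff (x y : α → ℝ) :
    Function.support ((boxB α).mulVec x) ⊂ Function.support ((boxB α).mulVec y) ↔
      Function.support x ⊂ Function.support y := by
  rw [Set.ssubset_def, Set.ssubset_def, box_support_subset_iff, box_support_subset_iff]

lemma fin_add_one_val {k : ℕ} (m : Fin (k+1)) :
    ((m + 1 : Fin (k+1))).val = if m.val = k then 0 else m.val + 1 := by
  have h2 : ((m + 1 : Fin (k+1))).val = (m.val + 1 % (k+1)) % (k+1) := by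
    rw [Fin.val_add, Fin.val_one']
  rw [h2]
  have h3 : (m.val + 1 % (k+1)) % (k+1) = (m.val + 1) % (k+1) := by
    conv_rhs => rw [Nat.add_mod, Nat.mod_eq_of_lt m.isLt]
  rw [h3]
  by_cases hm : m.val = k
  · rw [if_pos hm, hm, Nat.mod_self]
  · have := m.isLt
    rw [if_neg hm, Nat.mod_eq_of_lt (by omega)]

lemma incMat_mulVec_apply (G : Digraph' N α) (x : α → ℝ) (w : N) :
    (incMat G).mulVec x w =
      ∑ a, (if G.src a = w then x a else if G.dst a = w then -x a else 0) := by
  simp only [Matrix.mulVec, dotProduct, incMat, Matrix.of_apply]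
  refine Finset.sum_congr rfl fun a _ => ?_
  by_cases h1 : G.src a = w
  · simp [h1]
  · by_cases h2 : G.dst a = w <;> simp [h1, h2]

/-- data of a simple dicycle with positive-flow arcs. -/
def CycData (G : Digraph' N α) (k : ℕ) (e : Fin (k+1) → α) (v : Fin (k+1) → N) : Prop :=
  Function.Injective v ∧ ∀ i, G.src (e i) = v i ∧ G.dst (e i) = v (i + 1)

lemma CycData.v_ne {G : Digraph' N α} {k : ℕ} {e : Fin (k+1) → α} {v : Fin (k+1) → N}
    (h : CycData G k e v) (i : Fin (k+1)) : v i ≠ v (i+1) := by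
  rw [← (h.2 i).1, ← (h.2 i).2]; exact G.loopless _

lemma CycData.i_ne {G : Digraph' N α} {k : ℕ} {e : Fin (k+1) → α} {v : Fin (k+1) → N}
    (h : CycData G k e v) (i : Fin (k+1)) : i ≠ i + 1 :=
  fun hh => h.v_ne i (congrArg v hh)

lemma CycData.e_inj {G : Digraph' N α} {k : ℕ} {e : Fin (k+1) → α} {v : Fin (k+1) → N}
    (h : CycData G k e v) : Function.Injective e := fun i j hij =>
  h.1 (by rw [← (h.2 i).1, ← (h.2 j).1, hij])

lemma cyc_mulVec_at (G : Digraph' N α) {k : ℕ} {e : Fin (k+1) → α} {v : Fin (k+1) → N}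
    (h : CycData G k e v) (x : α → ℝ)
    (hx : ∀ a, x a ≠ 0 → a ∈ Set.range e) (i : Fin (k+1)) :
    (incMat G).mulVec x (v (i+1)) = x (e (i+1)) - x (e i) := by
  rw [incMat_mulVec_apply]
  have hne : e (i+1) ≠ e i := fun hh => h.i_ne i ((h.e_inj hh).symm)
  have key : ∀ a ∈ Finset.univ, a ∉ ({e (i+1), e i} : Finset α) →
      (if G.src a = v (i+1) then x a else if G.dst a = v (i+1) then -x a else 0) = 0 := by
    intro a _ ha
    simp only [Finset.mem_insert, Finset.mem_singleton, not_or] at ha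
    by_cases hxa : x a = 0
    · simp [hxa]
    · obtain ⟨j, rfl⟩ := hx a hxa
      have hj1 : G.src (e j) ≠ v (i+1) := by
        rw [(h.2 j).1]
        exact fun hh => ha.1 (congrArg e (h.1 hh))
      have hj2 : G.dst (e j) ≠ v (i+1) := by
        rw [(h.2 j).2]
        intro hh
        exact ha.2 (congrArg e (add_right_cancel (h.1 hh)))
      rw [if_neg hj1, if_neg hj2]
  rw [← Finset.sum_subset (Finset.subset_univ ({e (i+1), e i} : Finset α)) key,
    Finset.sum_pair hne]
  rw [if_pos ((h.2 (i+1)).1)]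
  have h1 : G.src (e i) ≠ v (i+1) := by
    rw [(h.2 i).1]; exact fun hh => h.i_ne i (h.1 hh)
  rw [if_neg h1, if_pos ((h.2 i).2)]
  ring

lemma cyc_mulVec_off (G : Digraph' N α) {k : ℕ} {e : Fin (k+1) → α} {v : Fin (k+1) → N}
    (h : CycData G k e v) (x : α → ℝ)
    (hx : ∀ a, x a ≠ 0 → a ∈ Set.range e) (w : N) (hw : w ∉ Set.range v) :
    (incMat G).mulVec x w = 0 := by
  rw [incMat_mulVec_apply]
  apply Finset.sum_eq_zero
  intro a _
  by_cases hxa : x a = 0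
  · simp [hxa]
  · obtain ⟨j, rfl⟩ := hx a hxa
    have hj1 : G.src (e j) ≠ w := by rw [(h.2 j).1]; exact fun hh => hw (Set.mem_range.mpr ⟨j, hh⟩)
    have hj2 : G.dst (e j) ≠ w := by rw [(h.2 j).2]; exact fun hh => hw (Set.mem_range.mpr ⟨j+1, hh⟩)
    rw [if_neg hj1, if_neg hj2]

open Fin.NatCast in
lemma cyc_const (G : Digraph' N α) {k : ℕ} {e : Fin (k+1) → α} {v : Fin (k+1) → N}
    (h : CycData G k e v) (x : α → ℝ)
    (hx : ∀ a, x a ≠ 0 → a ∈ Set.range e)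
    (hker : (incMat G).mulVec x = 0) : ∀ i, x (e i) = x (e 0) := by
  have step : ∀ i : Fin (k+1), x (e (i+1)) = x (e i) := by
    intro i
    have h0 := cyc_mulVec_at G h x hx i
    rw [hker] at h0
    have : (0 : ℝ) = x (e (i+1)) - x (e i) := h0
    linarith
  have hnat : ∀ n : ℕ, x (e (n : Fin (k+1))) = x (e 0) := by
    intro n
    induction n with
    | zero => norm_num
    | succ n ih =>
      have hcast : ((n+1 : ℕ) : Fin (k+1)) = (n : Fin (k+1)) + 1 := by
        push_cast; ring
      rw [hcast, step, ih]
  intro i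
  have hself : ((i.val : ℕ) : Fin (k+1)) = i := Fin.cast_val_eq_self i
  rw [← hself, hnat]

lemma cyc_indicator_ker (G : Digraph' N α) {k : ℕ} {e : Fin (k+1) → α} {v : Fin (k+1) → N}
    (h : CycData G k e v) :
    (incMat G).mulVec (chi (Set.range e)) = 0 := by
  funext w
  have hx : ∀ a, chi (Set.range e) a ≠ 0 → a ∈ Set.range e := fun a ha =>
    (chi_ne_iff _ _).mp ha
  by_cases hw : w ∈ Set.range v
  · obtain ⟨j, rfl⟩ := hw
    have hj : j = (j - 1) + 1 := by rw [sub_add_cancel]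
    rw [hj, cyc_mulVec_at G h _ hx (j-1)]
    rw [chi_mem (Set.mem_range_self ((j-1)+1)), chi_mem (Set.mem_range_self (j-1))]
    norm_num
  · rw [cyc_mulVec_off G h _ hx w hw]; rfl

lemma gcd_eq_one_of_one_mem {β : Type*} [Fintype β] [DecidableEq β] (z : β → ℤ) (b : β)
    (hb : z b = 1) : Finset.univ.gcd z = 1 := by
  have h1 : Finset.univ.gcd z ∣ 1 := hb ▸ Finset.gcd_dvd (Finset.mem_univ b)
  have h2 : 0 ≤ Finset.univ.gcd z := Int.nonneg_of_normalize_eq_self Finset.normalize_gcd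
  rcases Int.isUnit_iff.mp (isUnit_of_dvd_one h1) with h | h
  · exact h
  · omega

lemma cyc_isCircuit (G : Digraph' N α) {k : ℕ} {e : Fin (k+1) → α} {v : Fin (k+1) → N}
    (h : CycData G k e v) :
    IsCircuit (incMat G) (boxB α) (chi (Set.range e)) := by
  classical
  refine ⟨cyc_indicator_ker G h, ?_, ?_, ?_⟩
  · intro h0
    have := congrFun h0 (e 0)
    rw [chi_mem (Set.mem_range_self 0)] at this
    exact one_ne_zero this
  · refine ⟨fun a => if a ∈ Set.range e then 1 else 0, fun a => ?_, ?_⟩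
    · beta_reduce
      by_cases ha : a ∈ Set.range e
      · rw [if_pos ha, chi_mem ha, Int.cast_one]
      · rw [if_neg ha, chi_not_mem ha, Int.cast_zero]
    · refine gcd_eq_one_of_one_mem _ (e 0) ?_
      simp
  · intro x hker hne hss
    rw [box_support_ssubset_iff] at hss
    have hsub : ∀ a, x a ≠ 0 → a ∈ Set.range e := by
      intro a ha
      have := hss.1 ha
      exact (chi_ne_iff _ _).mp this
    have hconst := cyc_const G h x hsub hker
    obtain ⟨a, ha, hax⟩ := Set.exists_of_ssubset hss
    obtain ⟨j, rfl⟩ := (chi_ne_iff _ _).mp ha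
    have hj0 : x (e j) = 0 := by
      by_contra hc; exact hax hc
    have h00 : x (e 0) = 0 := by rw [← hconst j, hj0]
    apply hne
    funext a
    by_cases hxa : x a = 0
    · exact hxa
    · obtain ⟨i, rfl⟩ := hsub a hxa
      rw [hconst i, h00]; rfl

lemma exists_cyc_in_support (G : Digraph' N α) (g : α → ℝ)
    (hker : (incMat G).mulVec g = 0)
    (hnn : ∀ a, 0 ≤ g a) (hne : g ≠ 0) :
    ∃ (k : ℕ) (e : Fin (k+1) → α) (v : Fin (k+1) → N),
      CycData G k e v ∧ ∀ i, 0 < g (e i) := by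
  classical
  have hstep : ∀ a, 0 < g a → ∃ b, G.src b = G.dst a ∧ 0 < g b := by
    intro a ha
    by_contra hcon
    push_neg at hcon
    set w := G.dst a with hwdef
    have h0 : (incMat G).mulVec g w = 0 := by rw [hker]; rfl
    rw [incMat_mulVec_apply] at h0
    have hsplit : ∑ b, (if G.src b = w then g b else if G.dst b = w then -g b else 0)
        = (∑ b ∈ Finset.univ.filter (fun b => G.src b = w), g b)
          - ∑ b ∈ Finset.univ.filter (fun b => G.dst b = w), g b := by
      rw [Finset.sum_filter, Finset.sum_filter, ← Finset.sum_sub_distrib]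
      refine Finset.sum_congr rfl fun b _ => ?_
      by_cases h1 : G.src b = w
      · have h2 : G.dst b ≠ w := by
          rw [← h1]; exact fun hh => G.loopless b hh.symm
        simp [h1, h2]
      · by_cases h2 : G.dst b = w <;> simp [h1, h2]
    have hin : g a ≤ ∑ b ∈ Finset.univ.filter (fun b => G.dst b = w), g b := by
      refine Finset.single_le_sum (fun i _ => hnn i) ?_
      simp [hwdef]
    have hout : (∑ b ∈ Finset.univ.filter (fun b => G.src b = w), g b) ≤ 0 := by
      refine Finset.sum_nonpos fun b hb => ?_
      have := (Finset.mem_filter.mp hb).2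
      exact hcon b this
    rw [hsplit] at h0
    linarith
  obtain ⟨a₀, ha₀⟩ : ∃ a, 0 < g a := by
    by_contra hcon
    push_neg at hcon
    exact hne (funext fun a => le_antisymm (hcon a) (hnn a))
  let T := {a : α // 0 < g a}
  let nxt : T → T := fun a => ⟨(hstep a.1 a.2).choose, (hstep a.1 a.2).choose_spec.2⟩
  have hnxt : ∀ a : T, G.src (nxt a).1 = G.dst a.1 := fun a => (hstep a.1 a.2).choose_spec.1
  let f : ℕ → T := fun n => nxt^[n] ⟨a₀, ha₀⟩
  have hf : ∀ n, f (n+1) = nxt (f n) := fun n => Function.iterate_succ_apply' nxt n _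
  let w : ℕ → N := fun n => G.src (f n).1
  have hwd : ∀ n, G.dst (f n).1 = w (n+1) := by
    intro n
    show G.dst (f n).1 = G.src (f (n+1)).1
    rw [hf n, hnxt (f n)]
  obtain ⟨m, n, hmn, hweq⟩ := Finite.exists_ne_map_eq_of_infinite w
  have hex : ∃ j, ∃ i, i < j ∧ w i = w j := by
    rcases lt_or_gt_of_ne hmn with hlt | hlt
    · exact ⟨n, m, hlt, hweq⟩
    · exact ⟨m, n, hlt, hweq.symm⟩
  let j₀ := Nat.find hex
  obtain ⟨i₀, hij, hww⟩ : ∃ i, i < j₀ ∧ w i = w j₀ := Nat.find_spec hex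
  have hmin : ∀ j', j' < j₀ → ¬ ∃ i, i < j' ∧ w i = w j' := fun j' hj' => Nat.find_min hex hj'
  obtain ⟨k, hk1⟩ : ∃ k, i₀ + (k + 1) = j₀ := ⟨j₀ - i₀ - 1, by omega⟩
  refine ⟨k, fun m => (f (i₀ + m.val)).1, fun m => w (i₀ + m.val), ⟨?_, ?_⟩, fun m => (f (i₀ + m.val)).2⟩
  · -- injectivity of the node map
    intro m m' hmm
    by_contra hne'
    rcases Nat.lt_or_ge m.val m'.val with hlt | hge
    · have hlt2 : i₀ + m'.val < j₀ := by have := m'.isLt; omega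
      exact hmin (i₀ + m'.val) hlt2 ⟨i₀ + m.val, by omega, hmm⟩
    · have hlt' : m'.val < m.val := by
        rcases Nat.lt_or_ge m'.val m.val with h | h
        · exact h
        · exact absurd (Fin.ext (le_antisymm h hge)) hne'
      have hlt2 : i₀ + m.val < j₀ := by have := m.isLt; omega
      exact hmin (i₀ + m.val) hlt2 ⟨i₀ + m'.val, by omega, hmm.symm⟩
  · -- edge conditions
    intro m
    refine ⟨rfl, ?_⟩
    show G.dst (f (i₀ + m.val)).1 = w (i₀ + (m + 1 : Fin (k+1)).val)
    rw [hwd]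
    have hval := fin_add_one_val m
    rw [hval]
    by_cases hm : m.val = k
    · rw [if_pos hm]
      have : i₀ + m.val + 1 = j₀ := by omega
      rw [this]
      exact hww.symm
    · rw [if_neg hm]
      rw [Nat.add_assoc]

lemma circuit_nonneg_eq_chi (G : Digraph' N α) (g : α → ℝ)
    (hc : IsCircuit (incMat G) (boxB α) g) (hnn : ∀ a, 0 ≤ g a) :
    ∃ (k : ℕ) (e : Fin (k+1) → α) (v : Fin (k+1) → N),
      CycData G k e v ∧ g = chi (Set.range e) := by
  obtain ⟨hker, hne, ⟨z, hz, hgcd⟩, hmin⟩ := hc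
  obtain ⟨k, e, v, hcd, hpos⟩ := exists_cyc_in_support G g hker hnn hne
  have hchine : chi (Set.range e) ≠ 0 := by
    intro h0
    have := congrFun h0 (e 0)
    rw [chi_mem (Set.mem_range_self 0)] at this
    exact one_ne_zero this
  have hnotss := hmin (chi (Set.range e)) (cyc_indicator_ker G hcd) hchine
  rw [box_support_ssubset_iff] at hnotss
  have hsub : Function.support (chi (Set.range e)) ⊆ Function.support g := by
    intro a ha
    obtain ⟨i, rfl⟩ := (chi_ne_iff _ _).mp ha
    exact (hpos i).ne'
  have hsupp : ∀ a, g a ≠ 0 → a ∈ Set.range e := by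
    intro a ha
    by_contra hcon
    exact hnotss (HasSubset.Subset.ssubset_of_not_subset hsub (fun hs => hcon
      ((chi_ne_iff _ _).mp (hs ha))))
  have hconst := cyc_const G hcd g hsupp hker
  -- the common value is 1
  have hzdvd : ∀ a ∈ Finset.univ, z (e 0) ∣ z a := by
    intro a _
    by_cases ha : a ∈ Set.range e
    · obtain ⟨i, rfl⟩ := ha
      have : (z (e i) : ℝ) = (z (e 0) : ℝ) := by rw [hz, hz, hconst i]
      rw [Int.cast_injective this]
    · have hg0 : g a = 0 := by
        by_contra hc'; exact ha (hsupp a hc')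
      have : (z a : ℝ) = 0 := by rw [hz, hg0]
      rw [Int.cast_eq_zero.mp this]
      exact dvd_zero _
  have hdvd1 : z (e 0) ∣ 1 := hgcd ▸ Finset.dvd_gcd hzdvd
  have hz0pos : (0:ℝ) < (z (e 0) : ℝ) := by rw [hz]; exact hpos 0
  have hz01 : z (e 0) = 1 := by
    rcases Int.isUnit_iff.mp (isUnit_of_dvd_one hdvd1) with h | h
    · exact h
    · rw [h] at hz0pos; norm_num at hz0pos
  have hg1 : g (e 0) = 1 := by rw [← hz, hz01]; norm_num
  refine ⟨k, e, v, hcd, funext fun a => ?_⟩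
  by_cases ha : a ∈ Set.range e
  · obtain ⟨i, rfl⟩ := ha
    rw [chi_mem (Set.mem_range_self i), hconst i, hg1]
  · rw [chi_not_mem ha]
    by_contra hc'
    exact ha (hsupp a hc')


lemma fin2_cases (k : Fin 2) : k = 0 ∨ k = 1 := by omega

lemma chi_add_compl {T₁ T₂ : Set α} (hdisj : Disjoint T₁ T₂) (huniv : T₁ ∪ T₂ = Set.univ) :
    chi T₁ + chi T₂ = (1 : α → ℝ) := by
  funext a
  by_cases ha : a ∈ T₁
  · have h2 : a ∉ T₂ := fun h2 => Set.disjoint_left.mp hdisj ha h2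
    simp [chi_mem ha, chi_not_mem h2]
  · have ha2 : a ∈ T₂ := by
      have hu := Set.mem_univ a
      rw [← huniv] at hu
      rcases hu with h | h
      · exact absurd h ha
      · exact h
    simp [chi_mem ha2, chi_not_mem ha]

lemma inPoly_chi (G : Digraph' N α) {k : ℕ} {e : Fin (k+1) → α} {v : Fin (k+1) → N}
    (h : CycData G k e v) :
    InPoly (incMat G) 0 (boxB α) (boxd α) (chi (Set.range e)) := by
  refine ⟨cyc_indicator_ker G h, ?_⟩
  rw [boxB_mulVec]
  intro i
  rcases i with a | a
  · simpa [boxd] using chi_le_one (Set.range e) a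
  · simpa [boxd] using chi_nonneg (Set.range e) a

lemma backward_dir (G : Digraph' N α) (hD : DecompTwoHamiltonian G) :
    ∃ (g : Fin 2 → α → ℝ) (lam : Fin 2 → ℝ),
        IsCircuitWalk (incMat G) 0 (boxB α) (boxd α) (0 : α → ℝ) (1 : α → ℝ) 2 g lam ∧
        IsSCDecomp (incMat G) (boxB α) ((1 : α → ℝ) - (0 : α → ℝ)) 2 g lam := by
  obtain ⟨S₁, S₂, ⟨k₁, e₁, v₁, he₁, hv₁, hS₁, hev₁⟩, ⟨k₂, e₂, v₂, he₂, hv₂, hS₂, hev₂⟩,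
    hdisj, huniv⟩ := hD
  subst hS₁; subst hS₂
  have hcd₁ : CycData G k₁ e₁ v₁ := ⟨hv₁.1, hev₁⟩
  have hcd₂ : CycData G k₂ e₂ v₂ := ⟨hv₂.1, hev₂⟩
  have hsum1 : chi (Set.range e₁) + chi (Set.range e₂) = (1 : α → ℝ) :=
    chi_add_compl hdisj huniv
  have hmem₁ := inPoly_chi G hcd₁
  have hmemfull : InPoly (incMat G) 0 (boxB α) (boxd α) (1 : α → ℝ) := by
    refine ⟨?_, ?_⟩
    · rw [← hsum1, Matrix.mulVec_add, cyc_indicator_ker G hcd₁, cyc_indicator_ker G hcd₂]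
      simp
    · rw [boxB_mulVec]
      intro i
      rcases i with a | a
      · simp [boxd]
      · simp [boxd]
  have hcirc : ∀ i : Fin 2,
      IsCircuit (incMat G) (boxB α) (![chi (Set.range e₁), chi (Set.range e₂)] i) := by
    intro i
    fin_cases i
    · exact cyc_isCircuit G hcd₁
    · exact cyc_isCircuit G hcd₂
  refine ⟨![chi (Set.range e₁), chi (Set.range e₂)], fun _ => 1, ⟨hcirc, fun _ => one_pos,
    ?_, ?_, ?_⟩, hcirc, fun _ => one_pos, ?_, ?_⟩
  · -- membership along the walk
    intro k
    rcases fin2_cases k with rfl | rfl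
    · have hpt : (0 : α → ℝ) + ∑ i ∈ Finset.univ.filter (fun i => i ≤ (0 : Fin 2)),
          (fun _ => (1:ℝ)) i • ![chi (Set.range e₁), chi (Set.range e₂)] i
          = chi (Set.range e₁) := by
        rw [show Finset.univ.filter (fun i => i ≤ (0 : Fin 2)) = {0} from by decide,
          Finset.sum_singleton]
        simp
      rw [hpt]
      exact hmem₁
    · have hpt : (0 : α → ℝ) + ∑ i ∈ Finset.univ.filter (fun i => i ≤ (1 : Fin 2)),
          (fun _ => (1:ℝ)) i • ![chi (Set.range e₁), chi (Set.range e₂)] i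
          = (1 : α → ℝ) := by
        rw [show Finset.univ.filter (fun i => i ≤ (1 : Fin 2)) = Finset.univ from by decide,
          Fin.sum_univ_two]
        simp [hsum1]
      rw [hpt]
      exact hmemfull
  · -- endpoint
    rw [Fin.sum_univ_two]
    simp [hsum1]
  · -- maximality
    intro k mu hmu
    have hmu' : (1:ℝ) < mu := hmu
    rcases fin2_cases k with rfl | rfl
    · intro hP
      have hpt : ((0 : α → ℝ) + ∑ i ∈ Finset.univ.filter (fun i => i < (0 : Fin 2)),
          (fun _ => (1:ℝ)) i • ![chi (Set.range e₁), chi (Set.range e₂)] i)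
          + mu • ![chi (Set.range e₁), chi (Set.range e₂)] 0
          = mu • chi (Set.range e₁) := by
        rw [show Finset.univ.filter (fun i => i < (0 : Fin 2)) = ∅ from by decide]
        simp
      rw [hpt] at hP
      obtain ⟨_, hb⟩ := hP
      rw [boxB_mulVec] at hb
      have hba := hb (Sum.inl (e₁ 0))
      have hc1 : chi (Set.range e₁) (e₁ 0) = 1 := chi_mem (Set.mem_range_self 0)
      simp only [Sum.elim_inl, Pi.smul_apply, smul_eq_mul, boxd, hc1, mul_one] at hba
      linarith [hmu']
    · intro hP
      have hpt : ((0 : α → ℝ) + ∑ i ∈ Finset.univ.filter (fun i => i < (1 : Fin 2)),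
          (fun _ => (1:ℝ)) i • ![chi (Set.range e₁), chi (Set.range e₂)] i)
          + mu • ![chi (Set.range e₁), chi (Set.range e₂)] 1
          = chi (Set.range e₁) + mu • chi (Set.range e₂) := by
        rw [show Finset.univ.filter (fun i => i < (1 : Fin 2)) = {0} from by decide,
          Finset.sum_singleton]
        simp
      rw [hpt] at hP
      obtain ⟨_, hb⟩ := hP
      rw [boxB_mulVec] at hb
      have hba := hb (Sum.inl (e₂ 0))
      have hnm : e₂ 0 ∉ Set.range e₁ :=
        fun hm => Set.disjoint_left.mp hdisj hm (Set.mem_range_self 0)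
      have hc1 : chi (Set.range e₂) (e₂ 0) = 1 := chi_mem (Set.mem_range_self 0)
      have hc0 : chi (Set.range e₁) (e₂ 0) = 0 := chi_not_mem hnm
      simp only [Sum.elim_inl, Pi.add_apply, Pi.smul_apply, smul_eq_mul, boxd, hc1, hc0,
        mul_one] at hba
      linarith [hmu']
  · -- decomposition sum
    rw [Fin.sum_univ_two]
    simp [hsum1]
  · -- sign compatibility
    have hnn : ∀ (i : Fin 2) (a : α),
        0 ≤ ![chi (Set.range e₁), chi (Set.range e₂)] i a := by
      intro i a
      fin_cases i
      · exact chi_nonneg _ _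
      · exact chi_nonneg _ _
    intro i j idx
    rw [boxB_mulVec, boxB_mulVec]
    rcases idx with a | a
    · exact mul_nonneg (hnn i a) (hnn j a)
    · simp only [Sum.elim_inr, Pi.neg_apply, neg_mul_neg]
      exact mul_nonneg (hnn i a) (hnn j a)

lemma forward_dir (G : Digraph' N α)
    (hdeg : ∀ v : N, inDeg G v = 2 ∧ outDeg G v = 2)
    (hex : ∃ (g : Fin 2 → α → ℝ) (lam : Fin 2 → ℝ),
        IsCircuitWalk (incMat G) 0 (boxB α) (boxd α) (0 : α → ℝ) (1 : α → ℝ) 2 g lam ∧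
        IsSCDecomp (incMat G) (boxB α) ((1 : α → ℝ) - (0 : α → ℝ)) 2 g lam) :
    DecompTwoHamiltonian G := by
  obtain ⟨g, lam, ⟨hcirc, hlpos, hmem, hsum, hmax⟩, ⟨_, _, hsum', _⟩⟩ := hex
  have hsum1 : ∀ a, lam 0 * g 0 a + lam 1 * g 1 a = 1 := by
    intro a
    have h := congrFun hsum' a
    simp only [Finset.sum_apply, Pi.smul_apply, smul_eq_mul, Pi.sub_apply, Pi.one_apply,
      Pi.zero_apply, Fin.sum_univ_two] at h
    linarith
  have hm0 := hmem 0
  have hp0 : (0 : α → ℝ) + ∑ i ∈ Finset.univ.filter (fun i => i ≤ (0 : Fin 2)),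
      lam i • g i = lam 0 • g 0 := by
    rw [show Finset.univ.filter (fun i => i ≤ (0 : Fin 2)) = {0} from by decide,
      Finset.sum_singleton, zero_add]
  rw [hp0] at hm0
  obtain ⟨_, hbox0⟩ := hm0
  rw [boxB_mulVec] at hbox0
  have hub : ∀ a, lam 0 * g 0 a ≤ 1 := by
    intro a
    have := hbox0 (Sum.inl a)
    simpa [boxd] using this
  have hg0nn : ∀ a, 0 ≤ g 0 a := by
    intro a
    have h2 := hbox0 (Sum.inr a)
    have h3 : -(lam 0 * g 0 a) ≤ 0 := by simpa [boxd] using h2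
    nlinarith [hlpos 0]
  have hg1nn : ∀ a, 0 ≤ g 1 a := by
    intro a
    have h1 := hsum1 a
    have h2 := hub a
    nlinarith [hlpos 1]
  obtain ⟨k₁, e₁, v₁, hcd₁, hgeq₁⟩ := circuit_nonneg_eq_chi G (g 0) (hcirc 0) hg0nn
  obtain ⟨k₂, e₂, v₂, hcd₂, hgeq₂⟩ := circuit_nonneg_eq_chi G (g 1) (hcirc 1) hg1nn
  have hl0le : lam 0 ≤ 1 := by
    have := hub (e₁ 0)
    rw [hgeq₁, chi_mem (Set.mem_range_self 0), mul_one] at this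
    exact this
  have hl0ge : 1 ≤ lam 0 := by
    by_contra hc
    push_neg at hc
    refine hmax 0 1 hc ?_
    have hpt : ((0 : α → ℝ) + ∑ i ∈ Finset.univ.filter (fun i => i < (0 : Fin 2)),
        lam i • g i) + (1 : ℝ) • g 0 = chi (Set.range e₁) := by
      rw [show Finset.univ.filter (fun i => i < (0 : Fin 2)) = ∅ from by decide]
      simp [hgeq₁]
    rw [hpt]
    exact inPoly_chi G hcd₁
  have hl0 : lam 0 = 1 := le_antisymm hl0le hl0ge
  have hx20 : g 1 (e₂ 0) = 1 := by rw [hgeq₂, chi_mem (Set.mem_range_self 0)]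
  have hkey := hsum1 (e₂ 0)
  rw [hl0, hx20, one_mul, mul_one] at hkey
  have hg0e2 : g 0 (e₂ 0) = 0 := by
    rw [hgeq₁]
    by_cases hmem2 : e₂ 0 ∈ Set.range e₁
    · exfalso
      rw [hgeq₁, chi_mem hmem2] at hkey
      have := hlpos 1
      linarith
    · exact chi_not_mem hmem2
  have hl1 : lam 1 = 1 := by
    rw [hgeq₁] at hkey
    rw [hgeq₁] at hg0e2
    rw [hg0e2] at hkey
    linarith
  have hcompl : ∀ a, chi (Set.range e₁) a + chi (Set.range e₂) a = 1 := by
    intro a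
    have h := hsum1 a
    rw [hl0, hl1, one_mul, one_mul, hgeq₁, hgeq₂] at h
    exact h
  have hdisj : Disjoint (Set.range e₁) (Set.range e₂) := by
    rw [Set.disjoint_left]
    intro a h1 h2
    have := hcompl a
    rw [chi_mem h1, chi_mem h2] at this
    norm_num at this
  have huniv : Set.range e₁ ∪ Set.range e₂ = Set.univ := by
    apply Set.eq_univ_iff_forall.mpr
    intro a
    by_contra hn
    rw [Set.mem_union] at hn
    push_neg at hn
    have := hcompl a
    rw [chi_not_mem hn.1, chi_not_mem hn.2] at this
    norm_num at this
  have hsurj : ∀ (k : ℕ) (e : Fin (k+1) → α) (v : Fin (k+1) → N)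
      (k' : ℕ) (e' : Fin (k'+1) → α) (v' : Fin (k'+1) → N),
      CycData G k e v → CycData G k' e' v' →
      (∀ c : α, c ∉ Set.range e → c ∈ Set.range e') →
      Function.Surjective v := by
    intro k e v k' e' v' hcd hcd' hcover n
    have hcard : 1 < (Finset.univ.filter fun a => G.src a = n).card := by
      have h2 := (hdeg n).2
      unfold outDeg at h2
      omega
    obtain ⟨a, ha, b, hb, hab⟩ := Finset.one_lt_card.mp hcard
    have hsa : G.src a = n := (Finset.mem_filter.mp ha).2
    have hsb : G.src b = n := (Finset.mem_filter.mp hb).2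
    by_cases hA : a ∈ Set.range e
    · obtain ⟨i, rfl⟩ := hA
      exact ⟨i, ((hcd.2 i).1).symm.trans hsa⟩
    · by_cases hB : b ∈ Set.range e
      · obtain ⟨i, rfl⟩ := hB
        exact ⟨i, ((hcd.2 i).1).symm.trans hsb⟩
      · exfalso
        obtain ⟨i, rfl⟩ := hcover a hA
        obtain ⟨j, hj⟩ := hcover b hB
        have hvij : v' i = v' (j : Fin (k'+1)) := by
          rw [← (hcd'.2 i).1, ← (hcd'.2 j).1, hj, hsa, hsb]
        exact hab (by rw [← hj, hcd'.1 hvij])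
  have hcover₁₂ : ∀ c : α, c ∉ Set.range e₁ → c ∈ Set.range e₂ := by
    intro c hc
    have hu := Set.mem_univ c
    rw [← huniv] at hu
    rcases hu with h | h
    · exact absurd h hc
    · exact h
  have hcover₂₁ : ∀ c : α, c ∉ Set.range e₂ → c ∈ Set.range e₁ := by
    intro c hc
    have hu := Set.mem_univ c
    rw [← huniv] at hu
    rcases hu with h | h
    · exact h
    · exact absurd h hc
  refine ⟨Set.range e₁, Set.range e₂,
    ⟨k₁, e₁, v₁, hcd₁.e_inj, ⟨hcd₁.1, hsurj k₁ e₁ v₁ k₂ e₂ v₂ hcd₁ hcd₂ hcover₁₂⟩, rfl, hcd₁.2⟩,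
    ⟨k₂, e₂, v₂, hcd₂.e_inj, ⟨hcd₂.1, hsurj k₂ e₂ v₂ k₁ e₁ v₁ hcd₂ hcd₁ hcover₂₁⟩, rfl, hcd₂.2⟩,
    hdisj, huniv⟩


end Helpers

/-- For an Eulerian digraph `G` in which every node has in-degree `2` and
out-degree `2`, with `P` the 0/1-circulation polytope of `G`, there is a list of two circuit
steps that is simultaneously a circuit walk of length `2` from the zero flow to the full flow
and a sign-compatible circuit decomposition of `1 - 0` if and only if `G` decomposes into two
simple Hamiltonian dicycles. -/
theorem scm_walk_length_two_iff_two_hamiltonian_dicycles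
    {N α : Type*} [Fintype N] [Fintype α] [DecidableEq N] [DecidableEq α] [Nonempty N]
    (G : Digraph' N α)
    (hdeg : ∀ v : N, inDeg G v = 2 ∧ outDeg G v = 2) :
    (∃ (g : Fin 2 → α → ℝ) (lam : Fin 2 → ℝ),
        IsCircuitWalk (incMat G) 0 (boxB α) (boxd α) (0 : α → ℝ) (1 : α → ℝ) 2 g lam ∧
        IsSCDecomp (incMat G) (boxB α) ((1 : α → ℝ) - (0 : α → ℝ)) 2 g lam)
      ↔ DecompTwoHamiltonian G :=
  ⟨forward_dir G hdeg, backward_dir G⟩
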